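/- Let Ω ⊆ ℝⁿ and D ⊆ ℝᵐ be open sets, let f : ℝⁿ × ℝᵐ → ℝⁿ be analytic on Ω × D, let D₁ ⊆ D be open, and let φ : ℝᵐ → ℝⁿ be analytic on D₁ with, for every α ∈ D₁: φ(α) ∈ Ω, φ(α) = f(φ(α), α), ‖∂ₓf(φ(α), α)‖ < 1, and x ↦ f(x, α) maps Ω into Ω. Then the set G = { (x, α) : α ∈ D₁ and x ∈ DA(φ(α), α) } is an open subset of ℝⁿ × ℝᵐ, where DA(φ(α), α) = {x ∈ Ω : (f(·, α))^[k](x) → φ(α) as k → ∞}. -/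

import Mathlib

open Filter Topology

theorem union_of_domains_of_attraction_isOpen
    {n m : ℕ} (Ω : Set (EuclideanSpace ℝ (Fin n))) (D : Set (EuclideanSpace ℝ (Fin m)))
    (f : EuclideanSpace ℝ (Fin n) × EuclideanSpace ℝ (Fin m) → EuclideanSpace ℝ (Fin n))
    (hΩ : IsOpen Ω) (hD : IsOpen D)
    (hf : AnalyticOn ℝ f (Ω ×ˢ D))
    (D₁ : Set (EuclideanSpace ℝ (Fin m))) (hD₁open : IsOpen D₁) (hD₁sub : D₁ ⊆ D)
    (φ : EuclideanSpace ℝ (Fin m) → EuclideanSpace ℝ (Fin n))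
    (hφ : AnalyticOn ℝ φ D₁)
    (hφΩ : ∀ α ∈ D₁, φ α ∈ Ω)
    (hφfix : ∀ α ∈ D₁, φ α = f (φ α, α))
    (hφd : ∀ α ∈ D₁, ‖fderiv ℝ (fun x => f (x, α)) (φ α)‖ < 1)
    (hmaps : ∀ α ∈ D₁, Set.MapsTo (fun x => f (x, α)) Ω Ω) :
    IsOpen {p : EuclideanSpace ℝ (Fin n) × EuclideanSpace ℝ (Fin m) |
      p.2 ∈ D₁ ∧ p.1 ∈ Ω ∧
      Tendsto (fun k => (fun x => f (x, p.2))^[k] p.1) atTop (𝓝 (φ p.2))} := by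
  -- main proof
  rw [isOpen_iff_mem_nhds]
  rintro ⟨x₀, α₀⟩ ⟨hα₀, hx₀, htend⟩
  have hfN : AnalyticOnNhd ℝ f (Ω ×ˢ D) :=
    ((hΩ.prod hD).analyticOn_iff_analyticOnNhd).mp hf
  have hφN : AnalyticOnNhd ℝ φ D₁ := (hD₁open.analyticOn_iff_analyticOnNhd).mp hφ
  have hfC : ContinuousOn f (Ω ×ˢ D) := hfN.continuousOn
  have hfd : AnalyticOnNhd ℝ (fderiv ℝ f) (Ω ×ˢ D) := hfN.fderiv
  have p₀mem : ((φ α₀, α₀) : EuclideanSpace ℝ (Fin n) × EuclideanSpace ℝ (Fin m)) ∈ Ω ×ˢ D := ⟨hφΩ α₀ hα₀, hD₁sub hα₀⟩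
  set ι := ContinuousLinearMap.inl ℝ (EuclideanSpace ℝ (Fin n)) (EuclideanSpace ℝ (Fin m)) with hιdef
  have hιle : ‖ι‖ ≤ 1 := by
    refine ContinuousLinearMap.opNorm_le_bound _ zero_le_one fun x => ?_
    rw [one_mul]
    simp only [hιdef, ContinuousLinearMap.inl_apply, Prod.norm_def, norm_zero]
    exact max_le le_rfl (norm_nonneg x)
  have hder : ∀ x ∈ Ω, ∀ α ∈ D,
      HasFDerivAt (fun y => f (y, α)) ((fderiv ℝ f (x, α)).comp ι) x := by
    intro x hx α hα
    exact ((hfN (x, α) ⟨hx, hα⟩).differentiableAt.hasFDerivAt).comp x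
      (hasFDerivAt_prodMk_left x α)
  set A₀ := fderiv ℝ f (φ α₀, α₀) with hA₀
  have hA₀lt : ‖A₀.comp ι‖ < 1 := by
    have := hφd α₀ hα₀
    rwa [(hder (φ α₀) (hφΩ α₀ hα₀) α₀ (hD₁sub hα₀)).fderiv] at this
  set a := ‖A₀.comp ι‖ with ha
  set c : ℝ := (1 + a) / 2 with hc
  have hc0 : 0 ≤ c := by positivity
  have hc1 : c < 1 := by simp only [hc]; linarith
  set ε : ℝ := (1 - a) / 2 with hε
  have hεpos : 0 < ε := by simp only [hε]; linarith [hA₀lt]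
  -- continuity of the derivative at the base point
  have hcont : ContinuousAt (fderiv ℝ f) (φ α₀, α₀) :=
    hfd.continuousOn.continuousAt ((hΩ.prod hD).mem_nhds p₀mem)
  obtain ⟨ρ₁, hρ₁pos, hρ₁⟩ := Metric.continuousAt_iff.mp hcont ε hεpos
  obtain ⟨ρ₂, hρ₂pos, hρ₂⟩ := Metric.isOpen_iff.mp (hΩ.prod hD) _ p₀mem
  set ρ : ℝ := min ρ₁ ρ₂ with hρdef
  have hρpos : 0 < ρ := lt_min hρ₁pos hρ₂pos
  have hballsub : Metric.ball ((φ α₀, α₀) : EuclideanSpace ℝ (Fin n) × EuclideanSpace ℝ (Fin m)) ρ ⊆ Ω ×ˢ D :=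
    (Metric.ball_subset_ball (min_le_right _ _)).trans hρ₂
  have hmemball : ∀ α ∈ Metric.ball α₀ ρ, ∀ x ∈ Metric.ball (φ α₀) ρ,
      ((x, α) : EuclideanSpace ℝ (Fin n) × EuclideanSpace ℝ (Fin m)) ∈ Metric.ball ((φ α₀, α₀) : EuclideanSpace ℝ (Fin n) × EuclideanSpace ℝ (Fin m)) ρ := by
    intro α hα x hx
    rw [Metric.mem_ball, Prod.dist_eq]
    exact max_lt (Metric.mem_ball.mp hx) (Metric.mem_ball.mp hα)
  have hbound : ∀ α ∈ Metric.ball α₀ ρ, ∀ x ∈ Metric.ball (φ α₀) ρ,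
      ‖fderiv ℝ (fun y => f (y, α)) x‖ ≤ c := by
    intro α hα x hx
    have hmem := hmemball α hα x hx
    have hxΩ := (hballsub hmem).1
    have hαD := (hballsub hmem).2
    rw [(hder x hxΩ α hαD).fderiv]
    have hd : dist ((x, α) : EuclideanSpace ℝ (Fin n) × EuclideanSpace ℝ (Fin m)) (φ α₀, α₀) < ρ₁ :=
      lt_of_lt_of_le (Metric.mem_ball.mp hmem) (min_le_left _ _)
    have h2 : ‖fderiv ℝ f (x, α) - A₀‖ < ε := by
      have := hρ₁ hd
      rwa [dist_eq_norm] at this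
    have h1 : ‖(fderiv ℝ f (x, α)).comp ι - A₀.comp ι‖ ≤ ‖fderiv ℝ f (x, α) - A₀‖ := by
      rw [← ContinuousLinearMap.sub_comp]
      calc ‖(fderiv ℝ f (x, α) - A₀).comp ι‖
          ≤ ‖fderiv ℝ f (x, α) - A₀‖ * ‖ι‖ := ContinuousLinearMap.opNorm_comp_le _ _
        _ ≤ ‖fderiv ℝ f (x, α) - A₀‖ * 1 :=
            mul_le_mul_of_nonneg_left hιle (norm_nonneg _)
        _ = _ := mul_one _
    calc ‖(fderiv ℝ f (x, α)).comp ι‖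
        ≤ ‖A₀.comp ι‖ + ‖(fderiv ℝ f (x, α)).comp ι - A₀.comp ι‖ := norm_le_insert' _ _
      _ ≤ a + ε := add_le_add le_rfl (h1.trans h2.le)
      _ = c := by simp only [hε, hc]; ring
  have hMVT : ∀ α ∈ Metric.ball α₀ ρ, ∀ x ∈ Metric.ball (φ α₀) ρ,
      ∀ y ∈ Metric.ball (φ α₀) ρ, ‖f (x, α) - f (y, α)‖ ≤ c * ‖x - y‖ := by
    intro α hα x hx y hy
    have hαD : α ∈ D := (hballsub (hmemball α hα _ (Metric.mem_ball_self hρpos))).2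
    exact (convex_ball (φ α₀) ρ).norm_image_sub_le_of_norm_fderiv_le
      (fun z hz => (hder z (hballsub (hmemball α hα z hz)).1 α hαD).differentiableAt)
      (fun z hz => hbound α hα z hz) hy hx
  -- continuity of φ
  have hφcont : ContinuousAt φ α₀ := hφN.continuousOn.continuousAt (hD₁open.mem_nhds hα₀)
  obtain ⟨δ₁, hδ₁pos, hδ₁⟩ := Metric.continuousAt_iff.mp hφcont (ρ / 4) (by positivity)
  obtain ⟨δ₂, hδ₂pos, hδ₂⟩ := Metric.isOpen_iff.mp hD₁open α₀ hα₀
  set δ : ℝ := min (min δ₁ δ₂) ρ with hδdef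
  have hδpos : 0 < δ := lt_min (lt_min hδ₁pos hδ₂pos) hρpos
  have hδD₁ : Metric.ball α₀ δ ⊆ D₁ :=
    (Metric.ball_subset_ball ((min_le_left _ _).trans (min_le_right _ _))).trans hδ₂
  have hδρ : Metric.ball α₀ δ ⊆ Metric.ball α₀ ρ := Metric.ball_subset_ball (min_le_right _ _)
  have hδφ : ∀ α ∈ Metric.ball α₀ δ, ‖φ α - φ α₀‖ < ρ / 4 := by
    intro α hα
    have : dist α α₀ < δ₁ :=
      lt_of_lt_of_le (Metric.mem_ball.mp hα) ((min_le_left _ _).trans (min_le_left _ _))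
    have := hδ₁ this
    rwa [dist_eq_norm] at this
  -- convergence on the small ball
  have hconv : ∀ α ∈ Metric.ball α₀ δ, ∀ x ∈ Metric.ball (φ α₀) (ρ / 2),
      Tendsto (fun k => (fun y => f (y, α))^[k] x) atTop (𝓝 (φ α)) := by
    intro α hα x hx
    have hαD₁ : α ∈ D₁ := hδD₁ hα
    have hαρ : α ∈ Metric.ball α₀ ρ := hδρ hα
    have hφαball : φ α ∈ Metric.ball (φ α₀) ρ := by
      rw [Metric.mem_ball, dist_eq_norm]
      linarith [hδφ α hα, hρpos]
    set g := fun y => f (y, α) with hg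
    have key : ∀ k, ‖g^[k] x - φ α‖ ≤ c ^ k * (3 * ρ / 4) ∧
        g^[k] x ∈ Metric.ball (φ α₀) ρ := by
      intro k
      induction k with
      | zero =>
        constructor
        · simp only [Function.iterate_zero, id_eq, pow_zero, one_mul]
          have h1 : ‖x - φ α₀‖ < ρ / 2 := by
            have := Metric.mem_ball.mp hx; rwa [dist_eq_norm] at this
          calc ‖x - φ α‖ ≤ ‖x - φ α₀‖ + ‖φ α₀ - φ α‖ := norm_sub_le_norm_sub_add_norm_sub _ _ _
            _ ≤ ρ / 2 + ρ / 4 := by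
                have := hδφ α hα
                rw [← norm_neg (φ α₀ - φ α)] at *
                simp only [neg_sub] at *
                linarith
            _ ≤ 3 * ρ / 4 := by linarith
        · exact Metric.ball_subset_ball (by linarith) hx
      | succ k ih =>
        have h1 : g^[k + 1] x = f (g^[k] x, α) := Function.iterate_succ_apply' g k x
        have hstep : ‖g^[k + 1] x - φ α‖ ≤ c ^ (k + 1) * (3 * ρ / 4) := by
          rw [h1]
          calc ‖f (g^[k] x, α) - φ α‖ = ‖f (g^[k] x, α) - f (φ α, α)‖ := by
                rw [← hφfix α hαD₁]
            _ ≤ c * ‖g^[k] x - φ α‖ := hMVT α hαρ _ ih.2 _ hφαball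
            _ ≤ c * (c ^ k * (3 * ρ / 4)) := mul_le_mul_of_nonneg_left ih.1 hc0
            _ = c ^ (k + 1) * (3 * ρ / 4) := by ring
        refine ⟨hstep, ?_⟩
        rw [Metric.mem_ball, dist_eq_norm]
        have hck : c ^ (k + 1) ≤ 1 := pow_le_one₀ hc0 hc1.le
        calc ‖g^[k + 1] x - φ α₀‖ ≤ ‖g^[k + 1] x - φ α‖ + ‖φ α - φ α₀‖ :=
              norm_sub_le_norm_sub_add_norm_sub _ _ _
          _ < c ^ (k + 1) * (3 * ρ / 4) + ρ / 4 := by linarith [hδφ α hα, hstep]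
          _ ≤ 1 * (3 * ρ / 4) + ρ / 4 := by
              have : c ^ (k + 1) * (3 * ρ / 4) ≤ 1 * (3 * ρ / 4) :=
                mul_le_mul_of_nonneg_right hck (by linarith)
              linarith
          _ = ρ := by ring
    rw [tendsto_iff_norm_sub_tendsto_zero]
    have hlim : Tendsto (fun k : ℕ => c ^ k * (3 * ρ / 4)) atTop (𝓝 0) := by
      simpa using (tendsto_pow_atTop_nhds_zero_of_lt_one hc0 hc1).mul_const (3 * ρ / 4)
    exact squeeze_zero (fun k => norm_nonneg _) (fun k => (key k).1) hlim
  -- pick N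
  have hN : ∃ N, (fun x => f (x, α₀))^[N] x₀ ∈ Metric.ball (φ α₀) (ρ / 4) :=
    (htend.eventually (Metric.ball_mem_nhds _ (by positivity))).exists
  obtain ⟨N, hNmem⟩ := hN
  -- iterate of the skew-product map
  set Φ := fun p => (f p, p.2) with hΦdef
  have hΦc : ContinuousOn Φ (Ω ×ˢ D₁) :=
    ((hfC.mono (Set.prod_mono_right hD₁sub)).prodMk continuous_snd.continuousOn)
  have hΦm : Set.MapsTo Φ (Ω ×ˢ D₁) (Ω ×ˢ D₁) := fun p hp => ⟨hmaps p.2 hp.2 hp.1, hp.2⟩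
  have hiter : ∀ k (x : EuclideanSpace ℝ (Fin n)) (α : EuclideanSpace ℝ (Fin m)), Φ^[k] (x, α) = ((fun y => f (y, α))^[k] x, α) := by
    intro k
    induction k with
    | zero => intro x α; simp
    | succ k ih =>
      intro x α
      rw [Function.iterate_succ_apply', Function.iterate_succ_apply', ih]
  have hΦN : ContinuousOn (Φ^[N]) (Ω ×ˢ D₁) := hΦc.iterate hΦm N
  have hhc : ContinuousAt (fun p => (Φ^[N] p).1) ((x₀, α₀) : EuclideanSpace ℝ (Fin n) × EuclideanSpace ℝ (Fin m)) :=
    continuous_fst.continuousAt.comp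
      (hΦN.continuousAt ((hΩ.prod hD₁open).mem_nhds ⟨hx₀, hα₀⟩))
  have hval : (Φ^[N] ((x₀, α₀) : EuclideanSpace ℝ (Fin n) × EuclideanSpace ℝ (Fin m))).1 ∈ Metric.ball (φ α₀) (ρ / 2) := by
    rw [hiter]
    exact Metric.ball_subset_ball (by linarith) hNmem
  have hnb : (fun p : EuclideanSpace ℝ (Fin n) × EuclideanSpace ℝ (Fin m) => (Φ^[N] p).1) ⁻¹' Metric.ball (φ α₀) (ρ / 2) ∈
      𝓝 ((x₀, α₀) : EuclideanSpace ℝ (Fin n) × EuclideanSpace ℝ (Fin m)) :=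
    hhc.preimage_mem_nhds (Metric.isOpen_ball.mem_nhds hval)
  have hnb2 : (Ω ×ˢ (D₁ ∩ Metric.ball α₀ δ) : Set (EuclideanSpace ℝ (Fin n) × EuclideanSpace ℝ (Fin m))) ∈ 𝓝 ((x₀, α₀) : EuclideanSpace ℝ (Fin n) × EuclideanSpace ℝ (Fin m)) :=
    (hΩ.prod (hD₁open.inter Metric.isOpen_ball)).mem_nhds
      ⟨hx₀, hα₀, Metric.mem_ball_self hδpos⟩
  filter_upwards [hnb, hnb2] with p hp1 hp2
  obtain ⟨x, α⟩ := p
  obtain ⟨hxΩ, hαD₁, hαδ⟩ := hp2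
  refine ⟨hαD₁, hxΩ, ?_⟩
  rw [Set.mem_preimage, hiter] at hp1
  have htail := hconv α hαδ _ hp1
  rw [← tendsto_add_atTop_iff_nat N]
  convert htail using 2 with k
  exact Function.iterate_add_apply _ k N x
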